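/- Linear value function: fix estimated prices pε : Fin N → ℝ with 0 ≤ pε i ≤ pmax for all i, and let v i (s) = pε i * s. Then for every probability measure Q on Ω, α(Q) = ∑ i, max( pε i * b i - p* i * b i, 0 ), where p* i = ∫ p i dQ(p). -/

import Mathlib

open MeasureTheory

noncomputable section

/-- The set of possible price scenarios. -/
abbrev Omega (N : ℕ) (pmax : ℝ) : Type :=
  {p : Fin N → ℝ // ∀ i, 0 ≤ p i ∧ p i ≤ pmax}

/-- A position `S = (w, s)`: collected revenue `w ≥ 0` and remaining budgets `0 ≤ s i ≤ b i`. -/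
def IsPosition (N : ℕ) (b : Fin N → ℝ) (S : ℝ × (Fin N → ℝ)) : Prop :=
  0 ≤ S.1 ∧ ∀ i, 0 ≤ S.2 i ∧ S.2 i ≤ b i

/-- Return function of a position: `X_S(p) = w + ∑ i, p i * s i`. -/
def ret (N : ℕ) (pmax : ℝ) (S : ℝ × (Fin N → ℝ)) (p : Omega N pmax) : ℝ :=
  S.1 + ∑ i, p.1 i * S.2 i

/-- Generating function `θ(S) = -w - ∑ i, v i (s i)`. -/
def theta (N : ℕ) (v : Fin N → ℝ → ℝ) (S : ℝ × (Fin N → ℝ)) : ℝ :=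
  -S.1 - ∑ i, v i (S.2 i)

/-- Risk measure `ρ(X) = inf { θ(S) : S a position with X_S ≤ X pointwise }`, valued
in `ℝ ∪ {+∞}` (the infimum of the empty set is `+∞`). -/
def rho (N : ℕ) (b : Fin N → ℝ) (pmax : ℝ) (v : Fin N → ℝ → ℝ)
    (X : Omega N pmax → ℝ) : EReal :=
  sInf {t : EReal | ∃ S : ℝ × (Fin N → ℝ), IsPosition N b S ∧
    (∀ p, ret N pmax S p ≤ X p) ∧ t = ((theta N v S : ℝ) : EReal)}

/-- A bounded function on `Ω`. -/
def Bounded (N : ℕ) (pmax : ℝ) (X : Omega N pmax → ℝ) : Prop :=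
  ∃ C, ∀ p, |X p| ≤ C

/-- Penalty function `α(Q) = sup over bounded measurable X of (∫ (-X) dQ - ρ(X))`. -/
def alphaPen (N : ℕ) (b : Fin N → ℝ) (pmax : ℝ) (v : Fin N → ℝ → ℝ)
    (Q : Measure (Omega N pmax)) : EReal :=
  ⨆ X ∈ {X : Omega N pmax → ℝ | Measurable X ∧ Bounded N pmax X},
    (((∫ p, -X p ∂Q : ℝ) : EReal) - rho N b pmax v X)

/-- for the linear value function `v i (s) = pε i * s`, the penalty is
`α(Q) = ∑ i, max (pε i * b i - p* i * b i) 0`, where `p* i = ∫ p i dQ(p)`. -/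
theorem stmt10 (N : ℕ) (hN : 1 ≤ N) (b : Fin N → ℝ) (hb : ∀ i, 0 < b i)
    (pmax : ℝ) (hpmax : 0 < pmax)
    (pe : Fin N → ℝ) (hpe : ∀ i, 0 ≤ pe i ∧ pe i ≤ pmax)
    (v : Fin N → ℝ → ℝ) (hv : ∀ i s, v i s = pe i * s)
    (Q : Measure (Omega N pmax)) (hQ : IsProbabilityMeasure Q) :
    alphaPen N b pmax v Q =
      ((∑ i, max (pe i * b i - (∫ p : Omega N pmax, p.1 i ∂Q) * b i) 0 : ℝ) : EReal) := by
  haveI := hQ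
  set Pstar : Fin N → ℝ := fun i => ∫ p : Omega N pmax, p.1 i ∂Q with hPstar
  have hmeas : ∀ i, Measurable fun p : Omega N pmax => p.1 i := fun i =>
    (measurable_pi_apply i).comp measurable_subtype_coe
  have hint : ∀ i, Integrable (fun p : Omega N pmax => p.1 i) Q := by
    intro i
    refine (integrable_const pmax).mono' (hmeas i).aestronglyMeasurable (ae_of_all _ ?_)
    intro p
    rw [Real.norm_eq_abs, abs_le]
    exact ⟨by linarith [(p.2 i).1], (p.2 i).2⟩
  have hintret : ∀ S : ℝ × (Fin N → ℝ), Integrable (ret N pmax S) Q := by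
    intro S
    unfold ret
    exact (integrable_const S.1).add
      (integrable_finset_sum _ fun i _ => (hint i).mul_const _)
  have hintegral : ∀ S : ℝ × (Fin N → ℝ),
      ∫ p, ret N pmax S p ∂Q = S.1 + ∑ i, Pstar i * S.2 i := by
    intro S
    unfold ret
    rw [integral_add (integrable_const _)
        (integrable_finset_sum _ fun i _ => (hint i).mul_const _),
      integral_const, probReal_univ, one_smul,
      integral_finset_sum _ (fun i _ => (hint i).mul_const _)]
    congr 1
    exact Finset.sum_congr rfl fun i _ => integral_mul_const _ _
  have hθ : ∀ S : ℝ × (Fin N → ℝ), theta N v S = -S.1 - ∑ i, pe i * S.2 i := by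
    intro S; unfold theta; simp [hv]
  set R : ℝ := ∑ i, max (pe i * b i - Pstar i * b i) 0 with hR
  show alphaPen N b pmax v Q = (R : EReal)
  apply le_antisymm
  · apply iSup₂_le
    rintro X ⟨hXm, C, hC⟩
    have hXint : Integrable X Q := by
      refine (integrable_const C).mono' hXm.aestronglyMeasurable (ae_of_all _ ?_)
      intro p; rw [Real.norm_eq_abs]; exact hC p
    have hlow : (((∫ p, -X p ∂Q) - R : ℝ) : EReal) ≤ rho N b pmax v X := by
      apply le_sInf
      rintro t ⟨S, hS, hle, rfl⟩
      rw [EReal.coe_le_coe_iff]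
      have h2 : ∫ p, -X p ∂Q ≤ ∫ p, -(ret N pmax S p) ∂Q := by
        apply integral_mono hXint.neg (hintret S).neg
        intro p; exact neg_le_neg (hle p)
      rw [integral_neg, integral_neg, hintegral S] at h2
      rw [integral_neg, hθ S]
      have h3 : ∑ i, pe i * S.2 i - ∑ i, Pstar i * S.2 i ≤ R := by
        rw [← Finset.sum_sub_distrib, hR]
        refine Finset.sum_le_sum ?_
        intro i _
        obtain ⟨hs0, hsb⟩ := hS.2 i
        rcases le_or_gt (Pstar i) (pe i) with h | h
        · exact le_max_of_le_left (by nlinarith)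
        · exact le_max_of_le_right (by nlinarith)
      linarith
    calc ((∫ p, -X p ∂Q : ℝ) : EReal) - rho N b pmax v X
        ≤ ((∫ p, -X p ∂Q : ℝ) : EReal) - (((∫ p, -X p ∂Q) - R : ℝ) : EReal) :=
          EReal.sub_le_sub le_rfl hlow
      _ = (((∫ p, -X p ∂Q) - ((∫ p, -X p ∂Q) - R) : ℝ) : EReal) := (EReal.coe_sub _ _).symm
      _ = (R : EReal) := by norm_num
  · set sstar : Fin N → ℝ := fun i => if Pstar i ≤ pe i then b i else 0 with hsstar
    set Sstar : ℝ × (Fin N → ℝ) := ((0 : ℝ), sstar) with hSstar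
    have hs0b : ∀ i, 0 ≤ sstar i ∧ sstar i ≤ b i := by
      intro i
      by_cases h : Pstar i ≤ pe i <;> simp [hsstar, h, (hb i).le]
    have hpos : IsPosition N b Sstar := ⟨le_refl 0, hs0b⟩
    set Xs : Omega N pmax → ℝ := ret N pmax Sstar with hXs
    have hXm : Measurable Xs := by
      unfold Xs; unfold ret
      exact measurable_const.add
        (Finset.measurable_sum _ fun i _ => (hmeas i).mul_const _)
    have hXb : Bounded N pmax Xs := by
      refine ⟨∑ i, pmax * b i, fun p => ?_⟩
      have h1 : (0 : ℝ) ≤ ∑ i, p.1 i * sstar i :=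
        Finset.sum_nonneg fun i _ => mul_nonneg (p.2 i).1 (hs0b i).1
      have h2 : ∑ i, p.1 i * sstar i ≤ ∑ i, pmax * b i :=
        Finset.sum_le_sum fun i _ =>
          mul_le_mul (p.2 i).2 (hs0b i).2 (hs0b i).1 hpmax.le
      have : Xs p = 0 + ∑ i, p.1 i * sstar i := rfl
      rw [this, zero_add, abs_le]
      exact ⟨by linarith, h2⟩
    have hrho : rho N b pmax v Xs ≤ ((theta N v Sstar : ℝ) : EReal) :=
      sInf_le ⟨Sstar, hpos, fun p => le_rfl, rfl⟩
    have key : (((∫ p, -Xs p ∂Q) - theta N v Sstar : ℝ) : EReal) = (R : EReal) := by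
      rw [EReal.coe_eq_coe_iff]
      rw [integral_neg]
      have : ∫ p, Xs p ∂Q = Sstar.1 + ∑ i, Pstar i * Sstar.2 i := hintegral Sstar
      rw [this, hθ Sstar]
      have hterm : ∀ i ∈ Finset.univ,
          pe i * sstar i - Pstar i * sstar i = max (pe i * b i - Pstar i * b i) 0 := by
        intro i _
        by_cases h : Pstar i ≤ pe i
        · simp only [hsstar, if_pos h]
          rw [max_eq_left (by nlinarith [hb i])]
        · push_neg at h
          simp only [hsstar, if_neg (not_le.mpr h)]
          rw [max_eq_right (by nlinarith [hb i])]
          ring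
      have : ∑ i, (pe i * sstar i - Pstar i * sstar i) = R := by
        rw [hR]; exact Finset.sum_congr rfl hterm
      rw [Finset.sum_sub_distrib] at this
      show -(Sstar.1 + ∑ i, Pstar i * Sstar.2 i) - (-Sstar.1 - ∑ i, pe i * Sstar.2 i) = R
      have hfst : Sstar.1 = 0 := rfl
      have hsnd : Sstar.2 = sstar := rfl
      rw [hfst, hsnd]
      linarith
    calc (R : EReal) = (((∫ p, -Xs p ∂Q) - theta N v Sstar : ℝ) : EReal) := key.symm
      _ = ((∫ p, -Xs p ∂Q : ℝ) : EReal) - ((theta N v Sstar : ℝ) : EReal) := EReal.coe_sub _ _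
      _ ≤ ((∫ p, -Xs p ∂Q : ℝ) : EReal) - rho N b pmax v Xs := EReal.sub_le_sub le_rfl hrho
      _ ≤ alphaPen N b pmax v Q := by
          unfold alphaPen
          exact le_biSup (f := fun X : Omega N pmax → ℝ => ((∫ p, -X p ∂Q : ℝ) : EReal) - rho N b pmax v X)
            (show Xs ∈ {X : Omega N pmax → ℝ | Measurable X ∧ Bounded N pmax X} from ⟨hXm, hXb⟩)
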